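/- Let P = X(Y^TX)^†Y^T ∈ ℝ^{n×n} be an oblique projector with P ≠ 0 and P ≠ I. Then ‖P‖₂ = ‖I − P‖₂. -/

import Mathlib

open Matrix
open scoped RealInnerProductSpace

noncomputable section

/-- `B` is the Moore–Penrose pseudoinverse of `A` (the four Penrose conditions). -/
def IsMP {m n : ℕ} (A : Matrix (Fin m) (Fin n) ℝ) (B : Matrix (Fin n) (Fin m) ℝ) : Prop :=
  A * B * A = A ∧ B * A * B = B ∧ (A * B)ᵀ = A * B ∧ (B * A)ᵀ = B * A

/-- Euclidean norm of a vector. -/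
def _root_.enorm {a : ℕ} (v : Fin a → ℝ) : ℝ := Real.sqrt (∑ i, (v i) ^ 2)

/-- Spectral (ℓ2 operator) norm of a matrix. -/
def spec {a b : ℕ} (M : Matrix (Fin a) (Fin b) ℝ) : ℝ :=
  sSup {r | ∃ x : Fin b → ℝ, _root_.enorm x = 1 ∧ r = _root_.enorm (M.mulVec x)}

/-- Selection matrix whose columns are the columns of the identity indexed by `g`. -/
def sel {a b : ℕ} (g : Fin a → Fin b) : Matrix (Fin b) (Fin a) ℝ :=
  fun i j => if g j = i then 1 else 0

namespace ONA

variable {n : ℕ}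

def toE {n : ℕ} (v : Fin n → ℝ) : EuclideanSpace ℝ (Fin n) := (WithLp.equiv 2 (Fin n → ℝ)).symm v

@[simp] lemma norm_toE (v : Fin n → ℝ) : ‖toE v‖ = _root_.enorm v := by
  rw [EuclideanSpace.norm_eq, _root_.enorm]
  congr 1
  refine Finset.sum_congr rfl fun i _ => ?_
  simp [toE, Real.norm_eq_abs, sq_abs]

lemma toE_surj (x : EuclideanSpace ℝ (Fin n)) : toE (WithLp.equiv 2 (Fin n → ℝ) x) = x :=
  (WithLp.equiv 2 (Fin n → ℝ)).symm_apply_apply x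

lemma toE_inj : Function.Injective (toE (n := n)) :=
  (WithLp.equiv 2 (Fin n → ℝ)).symm.injective

@[simp] lemma toE_zero : toE (0 : Fin n → ℝ) = 0 := by
  simp [toE]

lemma toE_smul (c : ℝ) (v : Fin n → ℝ) : toE (c • v) = c • toE v := by
  simp [toE]

def mclm (M : Matrix (Fin n) (Fin n) ℝ) :
    EuclideanSpace ℝ (Fin n) →L[ℝ] EuclideanSpace ℝ (Fin n) :=
  LinearMap.toContinuousLinearMap (Matrix.toEuclideanLin M)

lemma mclm_apply (M : Matrix (Fin n) (Fin n) ℝ) (v : Fin n → ℝ) :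
    mclm M (toE v) = toE (M.mulVec v) := by
  simp [mclm, toE, Matrix.toEuclideanLin_apply]

lemma inner_toE (u v : Fin n → ℝ) : (⟪toE u, toE v⟫ : ℝ) = u ⬝ᵥ v := by
  simp [toE, PiLp.inner_apply, dotProduct, mul_comm]

lemma enorm_sq (v : Fin n → ℝ) : _root_.enorm v ^ 2 = v ⬝ᵥ v := by
  rw [_root_.enorm, Real.sq_sqrt (by positivity)]
  simp [dotProduct, sq]

def S (M : Matrix (Fin n) (Fin n) ℝ) : Set ℝ :=
  {r | ∃ x : Fin n → ℝ, _root_.enorm x = 1 ∧ r = _root_.enorm (M.mulVec x)}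

lemma mem_S_of_unit (M : Matrix (Fin n) (Fin n) ℝ) {y : EuclideanSpace ℝ (Fin n)}
    (hy : ‖y‖ = 1) : ‖mclm M y‖ ∈ S M := by
  refine ⟨WithLp.equiv 2 (Fin n → ℝ) y, ?_, ?_⟩
  · rw [← norm_toE, toE_surj]; exact hy
  · rw [← norm_toE, ← mclm_apply, toE_surj]

lemma bddAbove_S (M : Matrix (Fin n) (Fin n) ℝ) : BddAbove (S M) := by
  refine ⟨‖mclm M‖, ?_⟩
  rintro r ⟨x, hx, rfl⟩
  have h := (mclm M).le_opNorm (toE x)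
  rwa [mclm_apply, norm_toE, norm_toE, hx, mul_one] at h

lemma spec_nonneg (M : Matrix (Fin n) (Fin n) ℝ) : 0 ≤ spec M := by
  refine Real.sSup_nonneg ?_
  rintro r ⟨x, hx, rfl⟩
  exact Real.sqrt_nonneg _

lemma norm_le_spec (M : Matrix (Fin n) (Fin n) ℝ) {y : EuclideanSpace ℝ (Fin n)}
    (hy : ‖y‖ = 1) : ‖mclm M y‖ ≤ spec M :=
  le_csSup (bddAbove_S M) (mem_S_of_unit M hy)

lemma norm_le_spec_mul (M : Matrix (Fin n) (Fin n) ℝ) (x : EuclideanSpace ℝ (Fin n)) :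
    ‖mclm M x‖ ≤ spec M * ‖x‖ := by
  rcases eq_or_ne x 0 with rfl | hx0
  · simp
  · have hc : (0:ℝ) < ‖x‖ := norm_pos_iff.2 hx0
    have hy : ‖(‖x‖⁻¹ • x : EuclideanSpace ℝ (Fin n))‖ = 1 := by
      rw [norm_smul, norm_inv, norm_norm, inv_mul_cancel₀ hc.ne']
    have h := norm_le_spec M hy
    rw [_root_.map_smul, norm_smul, norm_inv, norm_norm] at h
    calc ‖mclm M x‖ = ‖x‖ * (‖x‖⁻¹ * ‖mclm M x‖) := by field_simp
    _ ≤ ‖x‖ * spec M := mul_le_mul_of_nonneg_left h hc.le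
    _ = spec M * ‖x‖ := mul_comm _ _

lemma enorm_mulVec_le (M : Matrix (Fin n) (Fin n) ℝ) (v : Fin n → ℝ) :
    _root_.enorm (M.mulVec v) ≤ spec M * _root_.enorm v := by
  have h := norm_le_spec_mul M (toE v)
  rwa [mclm_apply, norm_toE, norm_toE] at h

lemma spec_le_of_forall (M : Matrix (Fin n) (Fin n) ℝ) {c : ℝ} (hc : 0 ≤ c)
    (h : ∀ y : EuclideanSpace ℝ (Fin n), ‖y‖ = 1 → ‖mclm M y‖ ≤ c) : spec M ≤ c := by
  refine Real.sSup_le ?_ hc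
  rintro r ⟨x, hx, rfl⟩
  have := h (toE x) (by rw [norm_toE, hx])
  rwa [mclm_apply, norm_toE] at this

lemma enorm_pos {v : Fin n → ℝ} (hv : v ≠ 0) : 0 < _root_.enorm v := by
  have h : ‖toE v‖ = _root_.enorm v := norm_toE v
  have : toE v ≠ 0 := fun h0 => hv (toE_inj (by simpa using h0))
  rw [← h]
  exact norm_pos_iff.2 this

lemma dot_tmul (A : Matrix (Fin n) (Fin n) ℝ) (u v : Fin n → ℝ) :
    ((Aᵀ * A) *ᵥ u) ⬝ᵥ v = (A *ᵥ u) ⬝ᵥ (A *ᵥ v) := by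
  rw [← Matrix.mulVec_mulVec, Matrix.mulVec_transpose, ← Matrix.dotProduct_mulVec]

lemma dot_tmul' (A : Matrix (Fin n) (Fin n) ℝ) (u v : Fin n → ℝ) :
    u ⬝ᵥ ((Aᵀ * A) *ᵥ v) = (A *ᵥ u) ⬝ᵥ (A *ᵥ v) := by
  rw [← Matrix.mulVec_mulVec, Matrix.dotProduct_mulVec, Matrix.vecMul_transpose]

lemma exists_unit (hn : n ≠ 0) : ∃ y : EuclideanSpace ℝ (Fin n), ‖y‖ = 1 := by
  have i0 : Fin n := ⟨0, Nat.pos_of_ne_zero hn⟩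
  refine ⟨toE (Pi.single i0 1), ?_⟩
  rw [norm_toE, _root_.enorm]
  have : ∀ i, (Pi.single i0 1 : Fin n → ℝ) i ^ 2 = if i = i0 then 1 else 0 := by
    intro i
    rcases eq_or_ne i i0 with rfl | h
    · simp
    · simp [Pi.single_apply, h]
  rw [Finset.sum_congr rfl fun i _ => this i]
  simp

/-- The spectral norm squared is an eigenvalue of `Pᵀ * P`. -/
lemma spec_sq_eigen (hn : n ≠ 0) (P : Matrix (Fin n) (Fin n) ℝ) :
    ∃ u : Fin n → ℝ, u ≠ 0 ∧ (Pᵀ * P) *ᵥ u = (spec P ^ 2) • u := by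
  obtain ⟨e, he⟩ := exists_unit hn
  have hs : (Metric.sphere (0 : EuclideanSpace ℝ (Fin n)) 1).Nonempty :=
    ⟨e, by simpa [mem_sphere_zero_iff_norm] using he⟩
  obtain ⟨x₀, hx₀mem, hmax⟩ :=
    (isCompact_sphere (0 : EuclideanSpace ℝ (Fin n)) 1).exists_isMaxOn hs
      ((mclm P).continuous.norm.continuousOn)
  have hx₀ : ‖x₀‖ = 1 := mem_sphere_zero_iff_norm.mp hx₀mem
  set T := mclm (Pᵀ * P) with hTdef
  have hT : IsSelfAdjoint T := by
    rw [ContinuousLinearMap.isSelfAdjoint_iff_isSymmetric]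
    intro x y
    rw [← toE_surj x, ← toE_surj y]
    simp only [ContinuousLinearMap.coe_coe, hTdef]
    rw [mclm_apply, mclm_apply, inner_toE, inner_toE, dot_tmul, dot_tmul']
  have reAp : ∀ x, T.reApplyInnerSelf x = ‖mclm P x‖ ^ 2 := by
    intro x
    rw [ContinuousLinearMap.reApplyInnerSelf_apply, ← toE_surj x, mclm_apply, mclm_apply]
    have : (⟪toE ((Pᵀ * P) *ᵥ WithLp.equiv 2 (Fin n → ℝ) x),
        toE (WithLp.equiv 2 (Fin n → ℝ) x)⟫ : ℝ) =
        ((Pᵀ * P) *ᵥ WithLp.equiv 2 (Fin n → ℝ) x) ⬝ᵥ (WithLp.equiv 2 (Fin n → ℝ) x) :=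
      inner_toE _ _
    rw [show (RCLike.re : ℝ →+ ℝ) = AddMonoidHom.id ℝ from rfl]
    simp only [AddMonoidHom.id_apply]
    rw [this, dot_tmul, norm_toE, enorm_sq]
  have hmax' : IsMaxOn T.reApplyInnerSelf (Metric.sphere (0 : EuclideanSpace ℝ (Fin n)) 1) x₀ := by
    intro x hx
    simp only [Set.mem_setOf_eq, reAp]
    exact pow_le_pow_left₀ (norm_nonneg _) (hmax hx) 2
  have hextr : IsLocalExtrOn T.reApplyInnerSelf
      (Metric.sphere (0 : EuclideanSpace ℝ (Fin n)) ‖x₀‖) x₀ := by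
    rw [hx₀]; exact Or.inr hmax'.localize
  have heig := hT.eq_smul_self_of_isLocalExtrOn hextr
  have hval : ‖mclm P x₀‖ = spec P := by
    refine le_antisymm (norm_le_spec P hx₀) ?_
    refine spec_le_of_forall P (norm_nonneg _) fun y hy => ?_
    exact hmax (by simpa [mem_sphere_zero_iff_norm] using hy)
  have hray : T.rayleighQuotient x₀ = spec P ^ 2 := by
    rw [ContinuousLinearMap.rayleighQuotient, reAp, hval, hx₀]
    norm_num
  rw [hray] at heig
  refine ⟨WithLp.equiv 2 (Fin n → ℝ) x₀, ?_, ?_⟩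
  · intro h
    have : x₀ = 0 := by rw [← toE_surj x₀, h, toE_zero]
    rw [this] at hx₀; simp at hx₀
  · apply toE_inj
    rw [toE_smul, ← mclm_apply, toE_surj, ← hTdef]
    rw [heig]
    norm_num

lemma one_le_spec_of_idem {P : Matrix (Fin n) (Fin n) ℝ} (hP : P * P = P) (h0 : P ≠ 0) :
    1 ≤ spec P := by
  obtain ⟨i, j, hij⟩ : ∃ i j, P i j ≠ 0 := by
    by_contra h; push_neg at h; exact h0 (by ext i j; exact h i j)
  set w : Fin n → ℝ := P *ᵥ Pi.single j 1 with hw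
  have hw0 : w ≠ 0 := by
    intro h
    have := congrFun h i
    simp only [hw, Matrix.mulVec_single, mul_one, Pi.zero_apply] at this
    exact hij (by simpa using this)
  have hPw : P *ᵥ w = w := by
    rw [hw, Matrix.mulVec_mulVec, hP]
  have hew : 0 < _root_.enorm w := enorm_pos hw0
  set y : EuclideanSpace ℝ (Fin n) := (_root_.enorm w)⁻¹ • toE w with hy
  have hyn : ‖y‖ = 1 := by
    rw [hy, norm_smul, norm_toE, Real.norm_eq_abs, abs_of_pos (inv_pos.2 hew),
      inv_mul_cancel₀ hew.ne']
  have hfix : mclm P y = y := by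
    rw [hy, _root_.map_smul, mclm_apply, hPw]
  have h := norm_le_spec P hyn
  rwa [hfix, hyn] at h

lemma spec_le_spec_one_sub {P : Matrix (Fin n) (Fin n) ℝ} (hP : P * P = P)
    (h0 : P ≠ 0) (h1 : P ≠ 1) : spec P ≤ spec (1 - P) := by
  have hn : n ≠ 0 := by
    rintro rfl
    exact h0 (by ext i; exact i.elim0)
  set Q : Matrix (Fin n) (Fin n) ℝ := 1 - P with hQdef
  have hQ : Q * Q = Q := by
    rw [hQdef]
    have : (1 - P) * (1 - P) = 1 - P - P + P * P := by noncomm_ring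
    rw [this, hP]
    abel
  have hQ0 : Q ≠ 0 := by
    rw [hQdef, sub_ne_zero]
    exact fun h => h1 h.symm
  have hsQ1 : 1 ≤ spec Q := one_le_spec_of_idem hQ hQ0
  obtain ⟨u, hu0, hA⟩ := spec_sq_eigen hn P
  set lam : ℝ := spec P ^ 2 with hlam
  have hsP1 : 1 ≤ spec P := one_le_spec_of_idem hP h0
  have hlam1 : 1 ≤ lam := by nlinarith
  rcases eq_or_lt_of_le hlam1 with hlameq | hlamgt
  · have : spec P = 1 := by nlinarith [spec_nonneg P]
    rw [this]; exact hsQ1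
  · have hlam0 : lam ≠ 0 := by linarith
    have hPtP : Pᵀ * Pᵀ = Pᵀ := by rw [← Matrix.transpose_mul, hP]
    have hPt : Pᵀ *ᵥ u = u := by
      have h1' : Pᵀ *ᵥ ((Pᵀ * P) *ᵥ u) = (Pᵀ * P) *ᵥ u := by
        rw [Matrix.mulVec_mulVec, ← Matrix.mul_assoc, hPtP]
      rw [hA, Matrix.mulVec_smul] at h1'
      exact smul_right_injective _ hlam0 h1'
    set w : Fin n → ℝ := P *ᵥ u with hwdef
    have hPw : P *ᵥ w = w := by rw [hwdef, Matrix.mulVec_mulVec, hP]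
    have hPtw : Pᵀ *ᵥ w = lam • u := by rw [hwdef, Matrix.mulVec_mulVec, hA]
    have hQtQ : Qᵀ * Q = 1 - P - Pᵀ + Pᵀ * P := by
      rw [hQdef, Matrix.transpose_sub, Matrix.transpose_one]
      noncomm_ring
    set y : Fin n → ℝ := lam • u - w with hydef
    have c1 : (Qᵀ * Q) *ᵥ u = y := by
      rw [hQtQ, Matrix.add_mulVec, Matrix.sub_mulVec, Matrix.sub_mulVec,
        Matrix.one_mulVec, hPt, hA, hydef, hwdef]
      abel
    have hPtPw : (Pᵀ * P) *ᵥ w = lam • u := by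
      rw [← Matrix.mulVec_mulVec, hPw, hPtw]
    have c2 : (Qᵀ * Q) *ᵥ w = 0 := by
      rw [hQtQ, Matrix.add_mulVec, Matrix.sub_mulVec, Matrix.sub_mulVec,
        Matrix.one_mulVec, hPw, hPtw, hPtPw]
      abel
    have c3 : (Qᵀ * Q) *ᵥ y = lam • y := by
      rw [hydef, Matrix.mulVec_sub, Matrix.mulVec_smul, c1, c2, sub_zero]
    have hy0 : y ≠ 0 := by
      intro h
      have hwu : w = lam • u := by
        have := sub_eq_zero.mp (hydef ▸ h)
        exact this.symm
      have h2 : lam • (lam • u) = lam • u := by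
        calc lam • (lam • u) = lam • w := by rw [hwu]
        _ = P *ᵥ (lam • u) := by rw [← hwu, ← Matrix.mulVec_smul, ← hwu, hPw]
        _ = lam • u := by rw [← hwu, hPw, hwu]
      have h3 : lam • u = u := smul_right_injective _ hlam0 h2
      have h4 : (lam - 1) • u = 0 := by rw [sub_smul, one_smul, h3, sub_self]
      rcases smul_eq_zero.mp h4 with h5 | h5
      · have : lam = 1 := by linarith [sub_eq_zero.mp h5]
        linarith
      · exact hu0 h5
    have hdot : (Q *ᵥ y) ⬝ᵥ (Q *ᵥ y) = lam * (y ⬝ᵥ y) := by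
      rw [← dot_tmul, c3, smul_dotProduct, smul_eq_mul]
    have hny : _root_.enorm (Q *ᵥ y) ^ 2 = lam * _root_.enorm y ^ 2 := by
      rw [enorm_sq, enorm_sq, hdot]
    have hle : _root_.enorm (Q *ᵥ y) ≤ spec Q * _root_.enorm y := enorm_mulVec_le Q y
    have hypos : 0 < _root_.enorm y := enorm_pos hy0
    have h2 : _root_.enorm (Q *ᵥ y) ^ 2 ≤ (spec Q * _root_.enorm y) ^ 2 :=
      pow_le_pow_left₀ (Real.sqrt_nonneg _) hle 2
    have h3 : lam ≤ spec Q ^ 2 := by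
      rw [hny, mul_pow] at h2
      exact le_of_mul_le_mul_right h2 (pow_pos hypos 2)
    nlinarith [spec_nonneg Q, spec_nonneg P]

end ONA

/-- a nontrivial oblique projector `P = X (Yᵀ X)† Yᵀ` (idempotent, with
`P ≠ 0` and `P ≠ I`) satisfies `‖P‖₂ = ‖I − P‖₂`. -/
theorem oblique_projector_norm_eq {n k l : ℕ}
    (X : Matrix (Fin n) (Fin k) ℝ) (Y : Matrix (Fin n) (Fin l) ℝ)
    (G : Matrix (Fin k) (Fin l) ℝ) (hG : IsMP (Yᵀ * X) G)
    (hidem : (X * G * Yᵀ) * (X * G * Yᵀ) = X * G * Yᵀ)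
    (hP0 : X * G * Yᵀ ≠ 0) (hP1 : X * G * Yᵀ ≠ 1) :
    spec (X * G * Yᵀ) = spec (1 - X * G * Yᵀ) := by
  set P : Matrix (Fin n) (Fin n) ℝ := X * G * Yᵀ with hPdef
  have hQ : (1 - P) * (1 - P) = 1 - P := by
    have : (1 - P) * (1 - P) = 1 - P - P + P * P := by noncomm_ring
    rw [this, hidem]
    abel
  have hQ0 : (1 : Matrix (Fin n) (Fin n) ℝ) - P ≠ 0 := by
    rw [sub_ne_zero]; exact fun h => hP1 h.symm
  have hQ1 : (1 : Matrix (Fin n) (Fin n) ℝ) - P ≠ 1 := fun h => hP0 (sub_eq_self.mp h)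
  refine le_antisymm (ONA.spec_le_spec_one_sub hidem hP0 hP1) ?_
  have h := ONA.spec_le_spec_one_sub hQ hQ0 hQ1
  rwa [sub_sub_cancel] at h
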